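/- arXiv:1106.3638 — 5 statements merged into one kernel-verified Lean document; each statement's English description precedes it below -/
import Mathlib

section
/- Let R be a Noetherian ring and T = ⊕_{n∈ℤ} T_n a ℤ-graded module over a graded ring with base ring R. If T is almost Artinian (i.e., there is a graded submodule N ⊆ T with N_n = 0 for all n ≪ 0 such that T/N is Artinian), then T is tame: there exists n₀ ∈ ℤ such that either T_n = 0 for all n ≤ n₀, or T_n ≠ 0 for all n ≤ n₀. -/
/-!
STATEMENT 0: Over a Noetherian homogeneous graded ring `R = ⊕_{n≥0} R_n`
(given here as an `R₀`-algebra with a `ℤ`-grading `𝒜` vanishing in negative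
degrees, with `𝒜 0` the image of `R₀` and `R` generated over `R₀` by `𝒜 1`),
if a graded `R`-module `T` (grading `ℳ`) is almost Artinian — i.e. there is a
graded submodule `N ⊆ T` with `N_n = 0` for all `n ≪ 0` such that `T/N` is
Artinian — then `T` is tame: there is `n₀` with either `T_n = 0` for all
`n ≤ n₀` or `T_n ≠ 0` for all `n ≤ n₀`.
-/

open DirectSum Pointwise

section Aux

variable {R₀ R : Type} [CommRing R₀] [CommRing R] [Algebra R₀ R]
  (𝒜 : ℤ → Submodule R₀ R) [GradedAlgebra 𝒜]

/-- Decomposition of a homogeneous scalar multiple. -/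
lemma aux_decompose_smul
    {T : Type} [AddCommGroup T] [Module R₀ T] [Module R T] [IsScalarTower R₀ R T]
    (ℳ : ℤ → Submodule R₀ T) [SetLike.GradedSMul 𝒜 ℳ] [DirectSum.Decomposition ℳ]
    {d : ℤ} {r : R} (hr : r ∈ 𝒜 d) (x : T) (j : ℤ) :
    (DirectSum.decompose ℳ (r • x) (d + j) : T) = r • (DirectSum.decompose ℳ x j : T) := by
  induction x using DirectSum.Decomposition.inductionOn ℳ with
  | zero => simp
  | homogeneous m' =>
    rename_i i
    have hm : (m' : T) ∈ ℳ i := m'.2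
    have hmem : r • (m' : T) ∈ ℳ (d + i) := SetLike.GradedSMul.smul_mem hr hm
    by_cases h : i = j
    · subst h
      rw [DirectSum.decompose_of_mem_same ℳ hm, DirectSum.decompose_of_mem_same ℳ hmem]
    · rw [DirectSum.decompose_of_mem_ne ℳ hm h,
        DirectSum.decompose_of_mem_ne ℳ hmem (by omega), smul_zero]
  | add a b ha hb =>
    rw [smul_add, DirectSum.decompose_add, DirectSum.decompose_add, DirectSum.add_apply,
      DirectSum.add_apply, Submodule.coe_add, Submodule.coe_add, ha, hb, smul_add]

/-- Generated in degree one: positive graded pieces factor through degree 1. -/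
lemma aux_deg_one
    (hbase : 𝒜 0 = (1 : Submodule R₀ R))
    (hhomog : Algebra.adjoin R₀ ((𝒜 1 : Submodule R₀ R) : Set R) = ⊤)
    {d : ℤ} (hd : 0 < d) : 𝒜 d ≤ 𝒜 1 * 𝒜 (d - 1) := by
  intro r hr
  have key : ∀ x ∈ Submonoid.closure ((𝒜 1 : Submodule R₀ R) : Set R),
      ∃ e : ℕ, x ∈ 𝒜 (e : ℤ) ∧ (1 ≤ e → x ∈ 𝒜 1 * 𝒜 ((e : ℤ) - 1)) := by
    intro x hx
    induction hx using Submonoid.closure_induction with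
    | mem y hy =>
        refine ⟨1, by exact_mod_cast hy, fun _ => ?_⟩
        have h1 : (1 : R) ∈ 𝒜 ((1 : ℤ) - 1) := by
          rw [show (1 : ℤ) - 1 = 0 by ring]
          exact SetLike.one_mem_graded 𝒜
        simpa using Submodule.mul_mem_mul hy h1
    | one =>
        exact ⟨0, by exact_mod_cast SetLike.one_mem_graded 𝒜, fun h => by omega⟩
    | mul y z hy hz ihy ihz =>
        obtain ⟨e₁, hy1, hy2⟩ := ihy
        obtain ⟨e₂, hz1, hz2⟩ := ihz
        refine ⟨e₁ + e₂, ?_, ?_⟩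
        · have h := SetLike.mul_mem_graded hy1 hz1
          have : ((e₁ : ℤ) + (e₂ : ℤ)) = ((e₁ + e₂ : ℕ) : ℤ) := by push_cast; ring
          rwa [this] at h
        · intro he
          rcases Nat.eq_zero_or_pos e₁ with h1 | h1
          · subst h1
            have he₂ : 1 ≤ e₂ := by omega
            have hy0 : y ∈ (1 : Submodule R₀ R) := by
              rw [← hbase]; exact_mod_cast hy1
            obtain ⟨c, hc⟩ := Submodule.mem_one.mp hy0
            have hyz : y * z = c • z := by rw [← hc, Algebra.smul_def]
            rw [hyz, show ((0 : ℕ) + e₂) = e₂ from by omega]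
            exact Submodule.smul_mem _ _ (hz2 he₂)
          · have hy3 := hy2 h1
            have goal_eq : ((e₁ : ℤ) - 1) + (e₂ : ℤ) = ((e₁ + e₂ : ℕ) : ℤ) - 1 := by
              push_cast; ring
            have hmem : y * z ∈ 𝒜 1 * 𝒜 (((e₁ : ℤ) - 1) + (e₂ : ℤ)) := by
              refine Submodule.mul_induction_on hy3 (fun a ha b hb => ?_) (fun u v hu hv => ?_)
              · have hbz : b * z ∈ 𝒜 (((e₁ : ℤ) - 1) + (e₂ : ℤ)) :=
                  SetLike.mul_mem_graded hb hz1
                rw [show a * b * z = a * (b * z) from by ring]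
                exact Submodule.mul_mem_mul ha hbz
              · rw [show (u + v) * z = u * z + v * z from by ring]
                exact Submodule.add_mem _ hu hv
            rwa [goal_eq] at hmem
  have hr' : r ∈ Submodule.span R₀
      ((Submonoid.closure ((𝒜 1 : Submodule R₀ R) : Set R) : Submonoid R) : Set R) := by
    have h : r ∈ Subalgebra.toSubmodule (Algebra.adjoin R₀ ((𝒜 1 : Submodule R₀ R) : Set R)) := by
      rw [hhomog]; exact Submodule.mem_top
    rwa [Algebra.adjoin_eq_span] at h
  have main : (DirectSum.decompose 𝒜 r d : R) ∈ 𝒜 1 * 𝒜 (d - 1) := by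
    refine Submodule.span_induction ?_ ?_ ?_ ?_ hr'
    · intro x hx
      obtain ⟨e, he, h1⟩ := key x hx
      by_cases hde : (e : ℤ) = d
      · rw [DirectSum.decompose_of_mem_same 𝒜 (hde ▸ he)]
        have := h1 (by omega)
        rwa [hde] at this
      · rw [DirectSum.decompose_of_mem_ne 𝒜 he hde]
        exact Submodule.zero_mem _
    · simp
    · intro x y hx hy ihx ihy
      rw [DirectSum.decompose_add, DirectSum.add_apply, Submodule.coe_add]
      exact Submodule.add_mem _ ihx ihy
    · intro c x hx ihx
      rw [DirectSum.decompose_smul, DirectSum.smul_apply, Submodule.coe_smul]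
      exact Submodule.smul_mem _ _ ihx
  rwa [DirectSum.decompose_of_mem_same 𝒜 hr] at main

end Aux

theorem almostArtinian_tame
    (R₀ R : Type) [CommRing R₀] [CommRing R] [Algebra R₀ R]
    [IsNoetherianRing R]
    (𝒜 : ℤ → Submodule R₀ R) [GradedAlgebra 𝒜]
    (hneg : ∀ n : ℤ, n < 0 → 𝒜 n = ⊥)
    (hbase : 𝒜 0 = (1 : Submodule R₀ R))
    (hhomog : Algebra.adjoin R₀ ((𝒜 1 : Submodule R₀ R) : Set R) = ⊤)
    (T : Type) [AddCommGroup T] [Module R₀ T] [Module R T] [IsScalarTower R₀ R T]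
    (ℳ : ℤ → Submodule R₀ T) [SetLike.GradedSMul 𝒜 ℳ] [DirectSum.Decomposition ℳ]
    -- `T` is almost Artinian:
    (N : Submodule R T)
    (hNgraded : ∀ m ∈ N, ∀ n : ℤ, (DirectSum.decompose ℳ m n : T) ∈ N)
    (hNvanish : ∃ n₁ : ℤ, ∀ n ≤ n₁, ∀ m ∈ N, (DirectSum.decompose ℳ m n : T) = 0)
    (hArt : IsArtinian R (T ⧸ N)) :
    -- `T` is tame:
    ∃ n₀ : ℤ, (∀ n ≤ n₀, ℳ n = ⊥) ∨ (∀ n ≤ n₀, ℳ n ≠ ⊥) := by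
  classical
  obtain ⟨n₁, hN1⟩ := hNvanish
  set P : ℤ → Submodule R T := fun n => Submodule.span R (⋃ k ∈ Set.Iic n, (ℳ k : Set T)) with hP
  have hPmono : ∀ {a b : ℤ}, a ≤ b → P a ≤ P b := by
    intro a b hab
    apply Submodule.span_mono
    exact Set.biUnion_subset_biUnion_left (fun k hk => le_trans hk hab)
  set Q : ℤ → Submodule R (T ⧸ N) := fun n => (P n).map N.mkQ with hQ
  have hQmono : ∀ {a b : ℤ}, a ≤ b → Q a ≤ Q b := fun hab => Submodule.map_mono (hPmono hab)
  obtain ⟨i₀, hi₀⟩ := IsArtinian.monotone_stabilizes (R := R) (M := T ⧸ N)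
    ⟨fun i => OrderDual.toDual (Q (n₁ - i)),
     fun i j hij => hQmono (by
       have : (i : ℤ) ≤ (j : ℤ) := by exact_mod_cast hij
       omega)⟩
  set n₂ : ℤ := n₁ - i₀ with hn₂
  have hQeq : ∀ n ≤ n₂, Q n = Q n₂ := by
    intro n hn
    have h1 : ((n₁ - n).toNat : ℤ) = n₁ - n := Int.toNat_of_nonneg (by omega)
    have h2 : i₀ ≤ (n₁ - n).toNat := by omega
    have heq : Q (n₁ - i₀) = Q (n₁ - ((n₁ - n).toNat : ℤ)) :=
      congrArg OrderDual.ofDual (hi₀ _ h2)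
    rw [show n = n₁ - ((n₁ - n).toNat : ℤ) from by omega, ← heq]
  -- The key degree-lowering fact
  have KEY : ∀ n ≤ n₂, ℳ (n - 1) = ⊥ → ℳ n = ⊥ := by
    intro n hn hbot
    -- the "degree >= n pieces are generated in degree 1 over lower pieces" submodule
    set W : ℤ → Submodule R₀ T :=
      fun j => Submodule.span R₀ ((𝒜 1 : Set R) • (ℳ (j - 1) : Set T)) with hW
    have hWle : ∀ j : ℤ, W j ≤ ℳ j := by
      intro j
      simp only [hW]
      refine Submodule.span_le.mpr ?_
      rintro x ⟨a, ha, m, hm, rfl⟩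
      have : a • m ∈ ℳ (1 + (j - 1)) := SetLike.GradedSMul.smul_mem ha hm
      rwa [show (1 : ℤ) + (j - 1) = j from by ring] at this
    set V : ℤ → Submodule R₀ T := fun j => if j ≤ n - 1 then ℳ j else W j with hV
    have hVle : ∀ j : ℤ, V j ≤ ℳ j := by
      intro j
      simp only [hV]
      by_cases h : j ≤ n - 1
      · rw [if_pos h]
      · rw [if_neg h]; exact hWle j
    have K : ∀ (d i : ℤ) (r : R), r ∈ 𝒜 d → ∀ v ∈ V i, r • v ∈ V (d + i) := by
      intro d i r hr v hv
      rcases lt_trichotomy d 0 with hd | hd | hd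
      · rw [hneg d hd] at hr
        rw [Submodule.mem_bot] at hr
        rw [hr, zero_smul]
        exact Submodule.zero_mem _
      · subst hd
        rw [hbase] at hr
        obtain ⟨c, hc⟩ := Submodule.mem_one.mp hr
        rw [← hc, algebraMap_smul, zero_add]
        exact Submodule.smul_mem _ _ hv
      · by_cases hle : d + i ≤ n - 1
        · simp only [hV]
          rw [if_pos hle]
          exact SetLike.GradedSMul.smul_mem hr (hVle i hv)
        · simp only [hV]
          rw [if_neg hle]
          have hv' : v ∈ ℳ i := hVle i hv
          have hr1 : r ∈ 𝒜 1 * 𝒜 (d - 1) := aux_deg_one 𝒜 hbase hhomog hd hr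
          refine Submodule.mul_induction_on hr1 (fun a ha b hb => ?_) (fun u v' hu hv'' => ?_)
          · rw [mul_smul]
            have hbv : b • v ∈ ℳ ((d + i) - 1) := by
              have : b • v ∈ ℳ ((d - 1) + i) := SetLike.GradedSMul.smul_mem hb hv'
              rwa [show (d - 1) + i = (d + i) - 1 from by ring] at this
            exact Submodule.subset_span (Set.smul_mem_smul ha hbv)
          · rw [add_smul]
            exact Submodule.add_mem _ hu hv''
    -- the submodule of elements all of whose components lie in the V's
    set G : Submodule R T :=
      { carrier := { x : T | ∀ j : ℤ, (DirectSum.decompose ℳ x j : T) ∈ V j }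
        zero_mem' := by
          intro j
          rw [DirectSum.decompose_zero, DirectSum.zero_apply, Submodule.coe_zero]
          exact Submodule.zero_mem _
        add_mem' := by
          intro a b ha hb j
          rw [DirectSum.decompose_add, DirectSum.add_apply, Submodule.coe_add]
          exact Submodule.add_mem _ (ha j) (hb j)
        smul_mem' := by
          intro r x hx j
          rw [← DirectSum.sum_support_decompose 𝒜 r, Finset.sum_smul,
            DirectSum.decompose_sum, DFinsupp.finset_sum_apply,
            AddSubmonoidClass.coe_finset_sum]
          refine Submodule.sum_mem _ ?_
          intro i hi
          have hterm := aux_decompose_smul 𝒜 ℳ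
            (SetLike.coe_mem (DirectSum.decompose 𝒜 r i)) x (j - i)
          rw [show i + (j - i) = j from by ring] at hterm
          rw [hterm]
          have := K i (j - i) _ (SetLike.coe_mem (DirectSum.decompose 𝒜 r i)) _ (hx (j - i))
          rwa [show i + (j - i) = j from by ring] at this } with hG
    have hPG : P (n - 1) ≤ G := by
      refine Submodule.span_le.mpr ?_
      intro x hx
      obtain ⟨k, hk, hxk⟩ := Set.mem_iUnion₂.mp hx
      intro j
      by_cases h : k = j
      · subst h
        rw [DirectSum.decompose_of_mem_same ℳ hxk]
        simp only [hV]
        rw [if_pos (show k ≤ n - 1 from hk)]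
        exact hxk
      · rw [DirectSum.decompose_of_mem_ne ℳ hxk h]
        exact Submodule.zero_mem _
    -- now prove ℳ n = ⊥
    rw [eq_bot_iff]
    intro t ht
    rw [Submodule.mem_bot]
    have htP : t ∈ P n := Submodule.subset_span (Set.mem_biUnion (Set.mem_Iic.mpr le_rfl) ht)
    have htQ : N.mkQ t ∈ Q (n - 1) := by
      rw [hQeq (n - 1) (by omega), ← hQeq n hn]
      exact Submodule.mem_map_of_mem htP
    obtain ⟨t', ht'P, heq⟩ := Submodule.mem_map.mp htQ
    have htt' : t' - t ∈ N := by
      rw [← Submodule.Quotient.eq N]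
      simpa using heq
    have h0 : (DirectSum.decompose ℳ (t' - t) n : T) = 0 := hN1 n (by omega) _ htt'
    have hteq : (DirectSum.decompose ℳ t' n : T) = t := by
      rw [DirectSum.decompose_sub, DirectSum.sub_apply, Submodule.coe_sub,
        DirectSum.decompose_of_mem_same ℳ ht] at h0
      exact sub_eq_zero.mp h0
    have htV : t ∈ V n := by
      rw [← hteq]
      exact hPG ht'P n
    simp only [hV] at htV
    rw [if_neg (show ¬ n ≤ n - 1 from by omega)] at htV
    -- W n is ⊥ since ℳ (n-1) = ⊥
    have hWbot : W n ≤ ⊥ := by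
      simp only [hW]
      refine Submodule.span_le.mpr ?_
      rintro x ⟨a, ha, m, hm, rfl⟩
      rw [hbot] at hm
      simp only [Submodule.bot_coe, Set.mem_singleton_iff] at hm
      simp [hm]
    have := hWbot htV
    rwa [Submodule.mem_bot] at this
  -- Endgame
  by_cases hc : ∃ m ≤ n₂, ℳ m ≠ ⊥
  · obtain ⟨m, hm, hmne⟩ := hc
    refine ⟨m, Or.inr ?_⟩
    intro n hn
    by_contra h0
    have step : ∀ k, n ≤ k → (k ≤ n₂ → ℳ k = ⊥) := by
      refine Int.le_induction (motive := fun k _ => k ≤ n₂ → ℳ k = ⊥) (fun _ => h0) ?_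
      intro l hl ih hl2
      refine KEY (l + 1) hl2 ?_
      rw [show l + 1 - 1 = l from by ring]
      exact ih (by omega)
    exact hmne (step m hn hm)
  · push_neg at hc
    exact ⟨n₂, Or.inl hc⟩
end

section
/- A graded module T over a Noetherian homogeneous graded ring that is the sum of an Artinian graded submodule and a Noetherian graded submodule is almost Artinian, and moreover the property of being almost Artinian passes to graded subquotients: any graded submodule and any graded quotient of an almost Artinian graded module is almost Artinian. -/
/-!
STATEMENT 1: Over a Noetherian homogeneous graded ring, a graded module which
is the sum of an Artinian graded submodule and a Noetherian graded submodule
is almost Artinian; moreover almost Artinian-ness passes to graded submodules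
and graded quotients.  (Almost Artinian: there is a graded submodule `N` with
`N_n = 0` for `n ≪ 0` and Artinian quotient.)

A graded submodule `P` of `T`, as a graded module in its own right, is almost
Artinian iff there is a graded submodule `N ≤ P` with components vanishing in
all small degrees such that `P/N` is Artinian; a graded quotient `T/P` is
almost Artinian iff there is a graded submodule `N' ⊇ P` whose components lie
in `P` in all small degrees, with `T/N'` Artinian.  We use these descriptions
(via the correspondence of graded submodules) to avoid constructing gradings
on subquotients.
-/

/-- `N` is a graded submodule with respect to the grading `ℳ`. -/
def IsGradedSubmodule {R₀ R T : Type} [CommRing R₀] [CommRing R] [AddCommGroup T]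
    [Module R₀ T] [Module R T]
    (ℳ : ℤ → Submodule R₀ T) [DirectSum.Decomposition ℳ] (N : Submodule R T) : Prop :=
  ∀ m ∈ N, ∀ n : ℤ, (DirectSum.decompose ℳ m n : T) ∈ N

/-- The graded module `T` (with grading `ℳ`) is almost Artinian. -/
def IsAlmostArtinian (R₀ R T : Type) [CommRing R₀] [CommRing R] [AddCommGroup T]
    [Module R₀ T] [Module R T]
    (ℳ : ℤ → Submodule R₀ T) [DirectSum.Decomposition ℳ] : Prop :=
  ∃ N : Submodule R T, IsGradedSubmodule ℳ N ∧
    (∃ n₁ : ℤ, ∀ n ≤ n₁, ∀ m ∈ N, (DirectSum.decompose ℳ m n : T) = 0) ∧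
    IsArtinian R (T ⧸ N)

open DirectSum

section Aux
variable {R₀ R T : Type} [CommRing R₀] [CommRing R] [Algebra R₀ R]
  [AddCommGroup T] [Module R₀ T] [Module R T]
  (ℳ : ℤ → Submodule R₀ T) [DirectSum.Decomposition ℳ]

lemma decompose_add_coe (a b : T) (n : ℤ) :
    (DirectSum.decompose ℳ (a + b) n : T)
      = (DirectSum.decompose ℳ a n : T) + (DirectSum.decompose ℳ b n : T) := by
  rw [DirectSum.decompose_add]
  simp

lemma decompose_sum_coe {ι : Type} (s : Finset ι) (f : ι → T) (n : ℤ) :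
    (DirectSum.decompose ℳ (∑ i ∈ s, f i) n : T)
      = ∑ i ∈ s, (DirectSum.decompose ℳ (f i) n : T) := by
  classical
  induction s using Finset.induction with
  | empty => simp
  | @insert a s h ih =>
      rw [Finset.sum_insert h, Finset.sum_insert h, decompose_add_coe, ih]

variable (𝒜 : ℤ → Submodule R₀ R) [GradedAlgebra 𝒜] [SetLike.GradedSMul 𝒜 ℳ]

lemma smul_hom_low (hneg : ∀ n : ℤ, n < 0 → 𝒜 n = ⊥)
    (r : R) {i : ℤ} {x : T} (hx : x ∈ ℳ i) {n : ℤ} (hn : n < i) :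
    (DirectSum.decompose ℳ (r • x) n : T) = 0 := by
  induction r using DirectSum.Decomposition.inductionOn 𝒜 with
  | zero => simp
  | @homogeneous j a =>
      rcases lt_or_ge j 0 with hj | hj
      · have : (a : R) = 0 := by
          have h2 : (a : R) ∈ (⊥ : Submodule R₀ R) := by
            rw [← hneg j hj]; exact a.2
          simpa using h2
        simp [this]
      · have hmem : (a : R) • x ∈ ℳ (j + i) := SetLike.GradedSMul.smul_mem a.2 hx
        exact DirectSum.decompose_of_mem_ne ℳ hmem (by omega)
  | add r s hr hs =>
      rw [add_smul, decompose_add_coe, hr, hs, add_zero]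

lemma smul_low (hneg : ∀ n : ℤ, n < 0 → 𝒜 n = ⊥)
    (r : R) {d : ℤ} {m : T} (hm : ∀ n < d, (DirectSum.decompose ℳ m n : T) = 0)
    {n : ℤ} (hn : n < d) :
    (DirectSum.decompose ℳ (r • m) n : T) = 0 := by
  classical
  have hrm : r • m = ∑ i ∈ (DirectSum.decompose ℳ m).support,
      r • (DirectSum.decompose ℳ m i : T) := by
    rw [← Finset.smul_sum, DirectSum.sum_support_decompose]
  rw [hrm, decompose_sum_coe]
  refine Finset.sum_eq_zero fun i hi => ?_
  have hid : d ≤ i := by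
    by_contra h
    exact (DFinsupp.mem_support_iff.mp hi) (by
      ext; simpa using hm i (by omega))
  exact smul_hom_low ℳ 𝒜 hneg r (DirectSum.decompose ℳ m i).2 (by omega)

/-- Submodule of elements with vanishing components below `d`. -/
def lowBound (hneg : ∀ n : ℤ, n < 0 → 𝒜 n = ⊥) (d : ℤ) : Submodule R T where
  carrier := {m | ∀ n < d, (DirectSum.decompose ℳ m n : T) = 0}
  zero_mem' := by intro n _; simp
  add_mem' := by
    intro a b ha hb n hn
    rw [decompose_add_coe, ha n hn, hb n hn, add_zero]
  smul_mem' := fun r m hm n hn => smul_low ℳ 𝒜 hneg r hm hn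

end Aux


section Aux2
variable {R₀ R T : Type} [CommRing R₀] [CommRing R] [Algebra R₀ R]
  [AddCommGroup T] [Module R₀ T] [Module R T]
  (ℳ : ℤ → Submodule R₀ T) [DirectSum.Decomposition ℳ]

omit [CommRing R] [Algebra R₀ R] [Module R T] in
lemma exists_lowBound (x : T) :
    ∃ d : ℤ, ∀ n < d, (DirectSum.decompose ℳ x n : T) = 0 := by
  classical
  set F := (DirectSum.decompose ℳ x).support with hF
  by_cases h : F.Nonempty
  · refine ⟨F.min' h, fun n hn => ?_⟩
    have : n ∉ F := fun hc => absurd (F.min'_le n hc) (by omega)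
    have := DFinsupp.notMem_support_iff.mp this
    simp [this]
  · refine ⟨0, fun n _ => ?_⟩
    have : n ∉ F := fun hc => h ⟨n, hc⟩
    have := DFinsupp.notMem_support_iff.mp this
    simp [this]

omit [CommRing R] [Algebra R₀ R] [Module R T] in
lemma exists_lowBound_finset (s : Finset T) :
    ∃ d : ℤ, ∀ x ∈ s, ∀ n < d, (DirectSum.decompose ℳ x n : T) = 0 := by
  classical
  induction s using Finset.induction with
  | empty => exact ⟨0, by simp⟩
  | @insert x s hx ih =>
      obtain ⟨d₁, hd₁⟩ := ih
      obtain ⟨d₂, hd₂⟩ := exists_lowBound ℳ x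
      refine ⟨min d₁ d₂, fun y hy n hn => ?_⟩
      rcases Finset.mem_insert.mp hy with rfl | hy
      · exact hd₂ n (by omega)
      · exact hd₁ y hy n (by omega)

end Aux2

theorem almostArtinian_of_sum_and_subquotients
    (R₀ R : Type) [CommRing R₀] [CommRing R] [Algebra R₀ R]
    [IsNoetherianRing R]
    (𝒜 : ℤ → Submodule R₀ R) [GradedAlgebra 𝒜]
    (hneg : ∀ n : ℤ, n < 0 → 𝒜 n = ⊥)
    (hbase : 𝒜 0 = (1 : Submodule R₀ R))
    (hhomog : Algebra.adjoin R₀ ((𝒜 1 : Submodule R₀ R) : Set R) = ⊤)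
    (T : Type) [AddCommGroup T] [Module R₀ T] [Module R T] [IsScalarTower R₀ R T]
    (ℳ : ℤ → Submodule R₀ T) [SetLike.GradedSMul 𝒜 ℳ] [DirectSum.Decomposition ℳ] :
    -- (a) sum of an Artinian and a Noetherian graded submodule ⟹ almost Artinian
    ((∀ A B : Submodule R T, IsGradedSubmodule ℳ A → IsGradedSubmodule ℳ B →
        IsArtinian R A → B.FG → A ⊔ B = ⊤ →
        IsAlmostArtinian R₀ R T ℳ)
    -- (b) graded submodules of an almost Artinian module are almost Artinian
    ∧ (IsAlmostArtinian R₀ R T ℳ → ∀ P : Submodule R T, IsGradedSubmodule ℳ P →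
        ∃ N : Submodule R T, N ≤ P ∧ IsGradedSubmodule ℳ N ∧
          (∃ n₁ : ℤ, ∀ n ≤ n₁, ∀ m ∈ N, (DirectSum.decompose ℳ m n : T) = 0) ∧
          IsArtinian R (↥P ⧸ (N.comap P.subtype)))
    -- (c) graded quotients of an almost Artinian module are almost Artinian
    ∧ (IsAlmostArtinian R₀ R T ℳ → ∀ P : Submodule R T, IsGradedSubmodule ℳ P →
        ∃ N' : Submodule R T, P ≤ N' ∧ IsGradedSubmodule ℳ N' ∧
          (∃ n₁ : ℤ, ∀ n ≤ n₁, ∀ m ∈ N', (DirectSum.decompose ℳ m n : T) ∈ P) ∧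
          IsArtinian R (T ⧸ N'))) := by
  classical
  refine ⟨?_, ?_, ?_⟩
  · -- (a)
    intro A B hAg hBg hA hBfg hsum
    obtain ⟨s, hs⟩ := hBfg
    obtain ⟨d, hd⟩ := exists_lowBound_finset ℳ s
    have hBle : B ≤ lowBound ℳ 𝒜 hneg d := by
      rw [← hs, Submodule.span_le]
      intro x hx n hn
      exact hd x hx n hn
    refine ⟨B, hBg, ⟨d - 1, fun n hn m hm => hBle hm n (by omega)⟩, ?_⟩
    haveI := hA
    refine isArtinian_of_surjective A ((B.mkQ).comp A.subtype) ?_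
    intro t
    obtain ⟨t', rfl⟩ := B.mkQ_surjective t
    have ht' : t' ∈ A ⊔ B := hsum ▸ Submodule.mem_top
    obtain ⟨a, ha, b, hb, rfl⟩ := Submodule.mem_sup.mp ht'
    refine ⟨⟨a, ha⟩, ?_⟩
    simp only [LinearMap.comp_apply, Submodule.subtype_apply, Submodule.mkQ_apply]
    rw [Submodule.Quotient.eq]
    simpa using B.neg_mem hb
  · -- (b)
    rintro ⟨N, hNg, ⟨n₁, hn₁⟩, hNart⟩ P hPg
    refine ⟨N ⊓ P, inf_le_right, ?_, ⟨n₁, ?_⟩, ?_⟩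
    · intro m hm n
      exact ⟨hNg m hm.1 n, hPg m hm.2 n⟩
    · intro n hn m hm
      exact hn₁ n hn m hm.1
    · haveI := hNart
      set ψ : ↥P →ₗ[R] T ⧸ N := (N.mkQ).comp P.subtype with hψ
      have hker : LinearMap.ker ψ = (N ⊓ P).comap P.subtype := by
        ext x
        simp [hψ, LinearMap.mem_ker, Submodule.Quotient.mk_eq_zero,
          Submodule.mem_inf, x.2]
      rw [← hker]
      exact isArtinian_of_linearEquiv ψ.quotKerEquivRange.symm
  · -- (c)
    rintro ⟨N, hNg, ⟨n₁, hn₁⟩, hNart⟩ P hPg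
    refine ⟨N ⊔ P, le_sup_right, ?_, ⟨n₁, ?_⟩, ?_⟩
    · intro m hm n
      obtain ⟨a, ha, b, hb, rfl⟩ := Submodule.mem_sup.mp hm
      rw [decompose_add_coe]
      exact Submodule.add_mem _ (Submodule.mem_sup_left (hNg a ha n))
        (Submodule.mem_sup_right (hPg b hb n))
    · intro n hn m hm
      obtain ⟨a, ha, b, hb, rfl⟩ := Submodule.mem_sup.mp hm
      rw [decompose_add_coe, hn₁ n hn a ha, zero_add]
      exact hPg b hb n
    · haveI := hNart
      refine isArtinian_of_surjective (T ⧸ N)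
        (Submodule.mapQ N (N ⊔ P) LinearMap.id
          (by simpa using (le_sup_left : N ≤ N ⊔ P))) ?_
      intro t
      obtain ⟨t', rfl⟩ := (N ⊔ P).mkQ_surjective t
      refine ⟨N.mkQ t', ?_⟩
      simp [Submodule.mapQ_apply]
end

section
/- Let R = ⊕_{n≥0} R_n be a Noetherian homogeneous ring, M a finitely generated graded R-module, i ∈ ℕ₀, and suppose there is an integer n^i(M) and a finite set 𝔓 ⊆ Spec(R_0) consisting of primes of height ≤ 2 such that for all n ≤ n^i(M) the set of associated primes of height ≤ 2 of H^i_{R_+}(M)_n equals 𝔓. Then for every n ≤ n^i(M), the set of primes of height ≤ 3 in Supp_{R_0}(H^i_{R_+}(M)_n) not lying in the closure of 𝔓 equals the set of primes of height exactly 3 in Ass_{R_0}(H^i_{R_+}(M)_n) not lying in the closure of 𝔓. -/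
/-!
STATEMENT 3 (Lemma 2.6): Let `R₀` be the (Noetherian) base ring of a
homogeneous Noetherian graded ring and let `T n` (n ∈ ℤ) be the finitely
generated `R₀`-modules `H^i_{R_+}(M)_n` (the graded components of the `i`-th
local cohomology of a finitely generated graded module `M`).  Assume there is
`nᵢ` and a finite set `𝔓` of primes of height ≤ 2 with
`Ass_{R₀}(T n)^{≤2} = 𝔓` for all `n ≤ nᵢ`.  Then for every `n ≤ nᵢ`,
`(Supp_{R₀}(T n) \ closure 𝔓)^{≤3} = (Ass_{R₀}(T n) \ closure 𝔓)^{=3}`.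
The height of a prime is `Order.height` in `PrimeSpectrum R₀`, and the
closure of `𝔓` is the set of primes containing a member of `𝔓`.
-/

open LocalizedModule

/-- A minimal prime over the annihilator of a finitely generated module over a
Noetherian ring is an associated prime. -/
lemma IsAssociatedPrime.of_mem_minimalPrimes
    {R : Type*} [CommRing R] [IsNoetherianRing R]
    {M : Type*} [AddCommGroup M] [Module R M]
    (p : Ideal R) [hpprime : p.IsPrime]
    (hp : p ∈ (Module.annihilator R M).minimalPrimes)
    (hnt : Nontrivial (LocalizedModule p.primeCompl M)) :
    IsAssociatedPrime p M := by
  set S := p.primeCompl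
  set Rₚ := Localization S
  set Mₚ := LocalizedModule S M
  have hNoeth : IsNoetherianRing Rₚ := IsLocalization.isNoetherianRing S Rₚ inferInstance
  obtain ⟨Q, hQ⟩ := associatedPrimes.nonempty Rₚ Mₚ
  obtain ⟨hQprime, z, hz⟩ := isAssociatedPrime_iff.mp hQ
  obtain ⟨m, u, rfl⟩ : ∃ m u, z = LocalizedModule.mk m u :=
    LocalizedModule.induction_on (fun m s => ⟨m, s, rfl⟩) z
  set q := Q.comap (algebraMap R Rₚ) with hq
  have hqprime : q.IsPrime := Ideal.IsPrime.comap _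
  -- membership criterion for q
  have hmemq : ∀ r : R, r ∈ q ↔ r • (LocalizedModule.mk m u : Mₚ) = 0 := by
    intro r
    rw [hq, Ideal.mem_comap, hz, Submodule.mem_colon_singleton, Submodule.mem_bot,
      algebraMap_smul]
  -- ann M ≤ q
  have hannq : Module.annihilator R M ≤ q := by
    intro r hr
    rw [hmemq]
    rw [smul'_mk, Module.mem_annihilator.mp hr, zero_mk]
  -- q ≤ p
  have hqlep : q ≤ p := by
    rw [hq, ← Localization.AtPrime.comap_maximalIdeal (I := p)]
    exact Ideal.comap_mono (IsLocalRing.le_maximalIdeal hQprime.ne_top)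
  -- minimality gives q = p
  have hqp : q = p := le_antisymm hqlep (hp.2 ⟨hqprime, hannq⟩ hqlep)
  -- p is finitely generated
  obtain ⟨G, hG⟩ : ∃ G : Finset R, Ideal.span (G : Set R) = p :=
    (isNoetherian_def.mp inferInstance p).imp (fun _ h => h)
  -- each generator is killed by m up to an element of S
  have hgen : ∀ a ∈ G, ∃ c : S, (c : R) • a • m = 0 := by
    intro a ha
    have hap : a ∈ q := hqp.symm ▸ (hG ▸ Ideal.subset_span ha)
    rw [hmemq, smul'_mk, ← zero_mk u, mk_eq] at hap
    obtain ⟨c, hc⟩ := hap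
    refine ⟨c * u, ?_⟩
    have hc' : (c : R) • (u : R) • a • m = 0 := by
      simpa [Submonoid.smul_def, smul_zero] using hc
    rw [Submonoid.coe_mul, mul_smul]
    exact hc'
  -- common multiplier
  have key : ∀ (F : Finset R), (∀ a ∈ F, ∃ c : S, (c : R) • a • m = 0) →
      ∃ s : S, ∀ a ∈ F, (s : R) • a • m = 0 := by
    classical
    intro F
    induction F using Finset.induction_on with
    | empty => exact fun _ => ⟨1, by simp⟩
    | @insert a F ha ih =>
      intro H
      obtain ⟨s, hs⟩ := ih fun b hb => H b (Finset.mem_insert_of_mem hb)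
      obtain ⟨c, hc⟩ := H a (Finset.mem_insert_self a F)
      refine ⟨c * s, fun b hb => ?_⟩
      rcases Finset.mem_insert.mp hb with rfl | hb
      · rw [Submonoid.coe_mul, mul_comm, mul_smul, hc, smul_zero]
      · rw [Submonoid.coe_mul, mul_smul, hs b hb, smul_zero]
  obtain ⟨s, hs⟩ := key G hgen
  refine isAssociatedPrime_iff.mpr ⟨hpprime, (s : R) • m, le_antisymm ?_ ?_⟩
  · -- p ≤ ann (s • m)
    rw [← hG, Ideal.span_le]
    intro a ha
    rw [SetLike.mem_coe, Submodule.mem_colon_singleton, Submodule.mem_bot, smul_comm]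
    exact hs a ha
  · -- ann (s • m) ≤ p
    intro r hr
    rw [Submodule.mem_colon_singleton, Submodule.mem_bot] at hr
    have : r * (s : R) ∈ q := by
      rw [hmemq, smul'_mk, mul_smul, hr, zero_mk]
    have := hqp ▸ this
    exact (hpprime.mem_or_mem this).resolve_right s.2

theorem supp_minus_closure_eq_ass
    (R₀ : Type) [CommRing R₀] [IsNoetherianRing R₀]
    (T : ℤ → Type) [∀ n, AddCommGroup (T n)] [∀ n, Module R₀ (T n)]
    [∀ n, Module.Finite R₀ (T n)]
    (nᵢ : ℤ) (𝔓 : Set (PrimeSpectrum R₀)) (h𝔓fin : 𝔓.Finite)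
    (h𝔓ht : ∀ p ∈ 𝔓, Order.height p ≤ (2 : ℕ∞))
    (hAss : ∀ n : ℤ, n ≤ nᵢ →
      {p : PrimeSpectrum R₀ |
        p.asIdeal ∈ associatedPrimes R₀ (T n) ∧ Order.height p ≤ (2 : ℕ∞)} = 𝔓) :
    ∀ n : ℤ, n ≤ nᵢ →
      {p : PrimeSpectrum R₀ | p ∈ Module.support R₀ (T n) ∧
          Order.height p ≤ (3 : ℕ∞) ∧ ¬ (∃ q ∈ 𝔓, q ≤ p)}
        = {p : PrimeSpectrum R₀ | p.asIdeal ∈ associatedPrimes R₀ (T n) ∧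
            Order.height p = (3 : ℕ∞) ∧ ¬ (∃ q ∈ 𝔓, q ≤ p)} := by
  intro n hn
  ext p
  simp only [Set.mem_setOf_eq]
  constructor
  · rintro ⟨hsupp, hht, hnot⟩
    have hann : Module.annihilator R₀ (T n) ≤ p.asIdeal :=
      Module.mem_support_iff_of_finite.mp hsupp
    obtain ⟨qI, hqmin, hqle⟩ := Ideal.exists_minimalPrimes_le hann
    haveI hqIprime : qI.IsPrime := hqmin.1.1
    set q : PrimeSpectrum R₀ := ⟨qI, hqIprime⟩ with hqdef
    have hqlep : q ≤ p := hqle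
    have hqsupp : q ∈ Module.support R₀ (T n) :=
      Module.mem_support_iff_of_finite.mpr hqmin.1.2
    have hqass : qI ∈ associatedPrimes R₀ (T n) :=
      IsAssociatedPrime.of_mem_minimalPrimes qI hqmin (Module.mem_support_iff.mp hqsupp)
    have hq_not_le2 : ¬ Order.height q ≤ (2 : ℕ∞) := by
      intro h2
      exact hnot ⟨q, by rw [← hAss n hn]; exact ⟨hqass, h2⟩, hqlep⟩
    have hhq : Order.height q ≤ Order.height p := Order.height_mono hqlep
    have h3q : (3 : ℕ∞) ≤ Order.height q := by
      have h2lt : (2 : ℕ∞) < Order.height q := lt_of_not_ge hq_not_le2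
      have := (ENat.add_one_le_iff (n := Order.height q) (m := 2) (by decide)).mpr h2lt
      rwa [show (2 + 1 : ℕ∞) = 3 by norm_num] at this
    have hq3 : Order.height q = 3 := le_antisymm (le_trans hhq hht) h3q
    have hp3 : Order.height p = 3 := le_antisymm hht (le_trans h3q hhq)
    have hqp : q = p := by
      by_contra hne
      have hlt : q < p := lt_of_le_of_ne hqlep hne
      have := Order.height_strictMono hlt (by rw [hq3]; decide)
      rw [hq3, hp3] at this
      exact lt_irrefl _ this
    exact ⟨hqp ▸ hqass, hp3, hnot⟩
  · rintro ⟨hass, h3, hnot⟩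
    refine ⟨?_, le_of_eq h3, hnot⟩
    obtain ⟨-, m, hm⟩ := isAssociatedPrime_iff.mp hass
    refine Module.mem_support_iff_of_finite.mpr ?_
    intro r hr
    rw [hm, Submodule.mem_colon_singleton, Submodule.mem_bot]
    exact Module.mem_annihilator.mp hr m
end

section
/- Let R = ⊕_{n≥0} R_n be a Noetherian homogeneous ring and M a finitely generated graded R-module. If there exists an integer m such that Ass_{R_0}(M_n) is independent of n for all n ≥ m (equal to a set Ass*), then the set NZD*(M) of quasi-non-zero divisors on M, i.e., elements x ∈ R_0 that are non-zero divisors on M_n for all n ≫ 0, equals R_0 \ ⋃_{𝔭 ∈ Ass*} 𝔭. -/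
/-!
STATEMENT 5: `R` a Noetherian homogeneous graded ring (base ring `R₀`), `M` a
finitely generated graded `R`-module with components `ℳ n`.  If
`Ass_{R₀}(M_n)` equals a fixed set `Ass*` for all `n ≥ m₀`, then the set
`NZD*(M)` of quasi-non-zero divisors on `M` — elements `x ∈ R₀` that are
non-zero divisors on `M_n` for all `n ≫ 0` — equals `R₀ \ ⋃_{𝔭 ∈ Ass*} 𝔭`.
-/

theorem quasi_nonzerodivisors_eq_compl_union_assStar
    (R₀ R : Type) [CommRing R₀] [CommRing R] [Algebra R₀ R]
    [IsNoetherianRing R₀] [IsNoetherianRing R]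
    (𝒜 : ℤ → Submodule R₀ R) [GradedAlgebra 𝒜]
    (hneg : ∀ n : ℤ, n < 0 → 𝒜 n = ⊥)
    (hbase : 𝒜 0 = (1 : Submodule R₀ R))
    (hhomog : Algebra.adjoin R₀ ((𝒜 1 : Submodule R₀ R) : Set R) = ⊤)
    (M : Type) [AddCommGroup M] [Module R₀ M] [Module R M] [IsScalarTower R₀ R M]
    [Module.Finite R M]
    (ℳ : ℤ → Submodule R₀ M) [SetLike.GradedSMul 𝒜 ℳ] [DirectSum.Decomposition ℳ]
    (m₀ : ℤ) (AssStar : Set (Ideal R₀))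
    (hAss : ∀ n : ℤ, m₀ ≤ n → associatedPrimes R₀ (ℳ n) = AssStar) :
    {x : R₀ | ∃ n₀ : ℤ, ∀ n : ℤ, n₀ ≤ n →
        ∀ m ∈ ℳ n, x • m = (0 : M) → m = 0}
      = {x : R₀ | ∀ 𝔭 ∈ AssStar, x ∉ 𝔭} := by
  ext x
  simp only [Set.mem_setOf_eq]
  constructor
  · rintro ⟨n₀, hn₀⟩ 𝔭 h𝔭 hx
    set n := max n₀ m₀
    rw [← hAss n (le_max_right _ _)] at h𝔭
    obtain ⟨hprime, y, hy⟩ := isAssociatedPrime_iff.mp h𝔭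
    have hy0 : y ≠ 0 := by
      rintro rfl
      exact hprime.ne_top (by
        rw [hy, Ideal.eq_top_iff_one, Submodule.mem_colon_singleton, smul_zero]; exact Submodule.zero_mem _)
    have hxy : x • y = 0 := by
      have : x ∈ (⊥ : Submodule R₀ (ℳ n)).colon {y} := hy ▸ hx
      exact (Submodule.mem_bot R₀).mp (Submodule.mem_colon_singleton.mp this)
    have : x • (y : M) = 0 := by
      have := congrArg (Subtype.val) hxy
      simpa using this
    have := hn₀ n (le_max_left _ _) y y.2 this
    exact hy0 (by ext; simp [this])
  · intro hx
    refine ⟨m₀, fun n hn m hm hxm => ?_⟩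
    by_contra hm0
    have hm0' : (⟨m, hm⟩ : ℳ n) ≠ 0 := by
      simpa [Subtype.ext_iff] using hm0
    obtain ⟨P, hP, hle⟩ :=
      exists_le_isAssociatedPrime_of_isNoetherianRing R₀ (⟨m, hm⟩ : ℳ n) hm0'
    have hxP : x ∈ P := by
      apply hle
      rw [Submodule.mem_colon_singleton, Submodule.mem_bot]
      ext
      simpa using hxm
    exact hx P (by rw [← hAss n hn]; exact hP) hxP
end

section
/- Let R_0 be a Noetherian ring and (T_n)_{n≤0} a family of finitely generated R_0-modules such that the sets Ass_{R_0}(T_n) are eventually (for n ≪ 0) contained in ⋃_{m ≤ n₁} Ass_{R_0}(T_m) for fixed bounds and such that Ass_{R_0}(T_n)^{≤2} = 𝔓 for all n ≤ n^i, with 𝔓 finite. If every prime in the critical set C = ⋃_{n ≤ n^i} (Supp(T_n) \ closure(𝔓))^{≤3} is contained in Ass_{R_0}(T_{n'}) for some fixed n' ≤ n^i whenever it lies in Supp(T_n) for all n ≤ n', then: if C is finite, the set {𝔭 of height ≤ 3 : 𝔭-tameness fails for (T_n)} is finite and contained in C. -/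
/-!
STATEMENT 12 (abstract form of Proposition 2.8(b)-(c)): `R₀` Noetherian,
`(T n)_{n≤0}` finitely generated `R₀`-modules (the components
`H^i_{R_+}(M)_n`).  Assume: the sets `Ass(T n)` are eventually contained in
`⋃_{m ≤ n₁} Ass(T m)`; `Ass(T n)^{≤2} = 𝔓` (a finite set) for all `n ≤ nI`;
and every prime of the critical set
`C = ⋃_{n ≤ nI} (Supp(T n) \ closure 𝔓)^{≤3}` which lies in `Supp(T n)` for
all `n ≤ n'` (a suitable fixed `n' ≤ nI`) is an associated prime of `T n'`.
Then, if `C` is finite, the set of primes of height ≤ 3 at which tameness of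
`(T n)` fails is finite and contained in `C`.  (`𝔭`-tameness: `(T n)_𝔭` is
eventually always zero or eventually always nonzero as `n → -∞`, i.e. `𝔭` is
eventually always outside or always inside `Supp(T n)`.)
-/

theorem tameness_fails_only_on_critical_set
    (R₀ : Type) [CommRing R₀] [IsNoetherianRing R₀]
    (T : ℤ → Type) [∀ n, AddCommGroup (T n)] [∀ n, Module R₀ (T n)]
    [∀ n, Module.Finite R₀ (T n)]
    (n₁ nI : ℤ)
    (hAssBound : ∃ n₂ : ℤ, ∀ n : ℤ, n ≤ n₂ →
      associatedPrimes R₀ (T n) ⊆ ⋃ m ∈ {m : ℤ | m ≤ n₁}, associatedPrimes R₀ (T m))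
    (𝔓 : Set (PrimeSpectrum R₀)) (h𝔓fin : 𝔓.Finite)
    (h𝔓 : ∀ n : ℤ, n ≤ nI →
      {p : PrimeSpectrum R₀ |
        p.asIdeal ∈ associatedPrimes R₀ (T n) ∧ Order.height p ≤ (2 : ℕ∞)} = 𝔓)
    (C : Set (PrimeSpectrum R₀))
    (hC : C = ⋃ n ∈ {n : ℤ | n ≤ nI},
      {p : PrimeSpectrum R₀ | p ∈ Module.support R₀ (T n) ∧
        ¬ (∃ q ∈ 𝔓, q ≤ p) ∧ Order.height p ≤ (3 : ℕ∞)})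
    (hCass : ∃ n' : ℤ, n' ≤ nI ∧ ∀ p ∈ C,
      (∀ n : ℤ, n ≤ n' → p ∈ Module.support R₀ (T n)) →
        p.asIdeal ∈ associatedPrimes R₀ (T n'))
    (hCfin : C.Finite) :
    {p : PrimeSpectrum R₀ | Order.height p ≤ (3 : ℕ∞) ∧
        ¬ (∃ n₀ : ℤ, (∀ n : ℤ, n ≤ n₀ → p ∈ Module.support R₀ (T n)) ∨
            (∀ n : ℤ, n ≤ n₀ → p ∉ Module.support R₀ (T n)))}.Finite ∧
    {p : PrimeSpectrum R₀ | Order.height p ≤ (3 : ℕ∞) ∧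
        ¬ (∃ n₀ : ℤ, (∀ n : ℤ, n ≤ n₀ → p ∈ Module.support R₀ (T n)) ∨
            (∀ n : ℤ, n ≤ n₀ → p ∉ Module.support R₀ (T n)))} ⊆ C := by
  have key : {p : PrimeSpectrum R₀ | Order.height p ≤ (3 : ℕ∞) ∧
        ¬ (∃ n₀ : ℤ, (∀ n : ℤ, n ≤ n₀ → p ∈ Module.support R₀ (T n)) ∨
            (∀ n : ℤ, n ≤ n₀ → p ∉ Module.support R₀ (T n)))} ⊆ C := by
    intro p hp
    obtain ⟨hht, hnt⟩ := hp
    -- no prime of 𝔓 lies below p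
    have hno : ¬ (∃ q ∈ 𝔓, q ≤ p) := by
      rintro ⟨q, hq, hqp⟩
      apply hnt
      refine ⟨nI, Or.inl fun n hn => ?_⟩
      have hq' : q.asIdeal ∈ associatedPrimes R₀ (T n) := by
        have := h𝔓 n hn
        rw [← this] at hq
        exact hq.1
      have hqsupp : Module.annihilator R₀ (T n) ≤ q.asIdeal := by
        rw [← Submodule.annihilator_top]
        exact hq'.annihilator_le
      exact Module.mem_support_iff_of_finite.mpr (hqsupp.trans hqp)
    -- p is in the support of some T n with n ≤ nI
    have hsome : ∃ n : ℤ, n ≤ nI ∧ p ∈ Module.support R₀ (T n) := by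
      by_contra h
      push_neg at h
      exact hnt ⟨nI, Or.inr fun n hn => h n hn⟩
    obtain ⟨n, hn, hsupp⟩ := hsome
    rw [hC]
    exact Set.mem_biUnion hn ⟨hsupp, hno, hht⟩
  exact ⟨hCfin.subset key, key⟩
end
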